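/- arXiv:2501.18679 — 2 statements merged into one kernel-verified Lean document; each statement's English description precedes it below -/
import Mathlib

section
/- (Eq. (lamTT).) Let N = N_A + N_B with D = 2^N, D_A = 2^{N_A}, D_B = 2^{N_B}, identify (Fin N → Fin 2) with (Fin N_A → Fin 2) × (Fin N_B → Fin 2), and let σ : Equiv.Perm (Fin 4). Then tr(Λ⁺ * T_σ * T') = D_A^(#(σ·π_A) − 2·δ(σ·π_A)) · D_B^(#(σ·π_B) − 2·δ(σ·π_B)), where π_A = (0 1)(2 3) and π_B = (0 3)(1 2). -/
open Matrix Kronecker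
open scoped Classical

noncomputable section

/-- Single-qubit Pauli matrices. -/
def pauli : Fin 4 → Matrix (Fin 2) (Fin 2) ℂ :=
  ![1, !![0, 1; 1, 0], !![0, -Complex.I; Complex.I, 0], !![1, 0; 0, -1]]

/-- Pauli string on `N` qubits with label `a`. -/
def PauliString {N : ℕ} (a : Fin N → Fin 4) :
    Matrix (Fin N → Fin 2) (Fin N → Fin 2) ℂ :=
  fun f g => ∏ k, pauli (a k) (f k) (g k)

/-- Reduced Choi state: partial trace over the doubled-B factor of the
normalized Choi state of `O`. -/
def rhoA {ιA ιB : Type*} [Fintype ιA] [Fintype ιB]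
    (O : Matrix (ιA × ιB) (ιA × ιB) ℂ) :
    Matrix (ιA × ιA) (ιA × ιA) ℂ :=
  fun p q =>
    (1 / (Fintype.card ιA * Fintype.card ιB : ℂ)) *
      ∑ b : ιB, ∑ b' : ιB, O (p.1, b) (p.2, b') * star (O (q.1, b) (q.2, b'))

/-- Identification of `N = N_A + N_B` qubits with the pair of subsystems. -/
def qubitEquiv (NA NB : ℕ) :
    (Fin (NA + NB) → Fin 2) ≃ (Fin NA → Fin 2) × (Fin NB → Fin 2) :=
  (Equiv.arrowCongr finSumFinEquiv.symm (Equiv.refl (Fin 2))).trans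
    (Equiv.sumArrowEquivProdArrow _ _ _)

/-- Reduced Choi state of an `N = N_A + N_B` qubit operator, subsystem A
being the first `N_A` qubits. -/
def rhoAq (NA NB : ℕ)
    (O : Matrix (Fin (NA + NB) → Fin 2) (Fin (NA + NB) → Fin 2) ℂ) :
    Matrix ((Fin NA → Fin 2) × (Fin NA → Fin 2))
      ((Fin NA → Fin 2) × (Fin NA → Fin 2)) ℂ :=
  rhoA (Matrix.reindex (qubitEquiv NA NB) (qubitEquiv NA NB) O)

/-- `n`-fold replica (tensor power) of a matrix. -/
def replica {ι : Type*} (n : ℕ) (O : Matrix ι ι ℂ) :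
    Matrix (Fin n → ι) (Fin n → ι) ℂ :=
  fun f g => ∏ a, O (f a) (g a)

/-- Replica permutation operator. -/
def Tperm {ι : Type*} [DecidableEq ι] {n : ℕ} (π : Equiv.Perm (Fin n)) :
    Matrix (Fin n → ι) (Fin n → ι) ℂ :=
  fun f g => if f = g ∘ π then 1 else 0

/-- Number of cycles of a permutation, counting fixed points as 1-cycles. -/
def numCycles {n : ℕ} (π : Equiv.Perm (Fin n)) : ℕ :=
  Multiset.card π.cycleType + (Finset.univ.filter fun x => π x = x).card

/-- `δ(π) = 0` if `π` has no fixed points and all cycles of even length,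
else `δ(π) = 1`. -/
def deltaOdd {n : ℕ} (π : Equiv.Perm (Fin n)) : ℕ :=
  if (∀ x, π x ≠ x) ∧ (∀ c ∈ π.cycleType, Even c) then 0 else 1

/-- Projector onto four-fold replicated Pauli strings. -/
def LambdaPlus (N : ℕ) :
    Matrix (Fin 4 → (Fin N → Fin 2)) (Fin 4 → (Fin N → Fin 2)) ℂ :=
  (1 / (4 ^ N : ℂ)) • ∑ a : Fin N → Fin 4, replica 4 (PauliString a)

def permA : Equiv.Perm (Fin 4) := Equiv.swap 0 1 * Equiv.swap 2 3
def permB : Equiv.Perm (Fin 4) := Equiv.swap 0 3 * Equiv.swap 1 2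

/-- The purity contraction permutation operator `T'` on four replicas of a
bipartite system. -/
def Tprime {ιA ιB : Type*} [DecidableEq ιA] [DecidableEq ιB] :
    Matrix (Fin 4 → ιA × ιB) (Fin 4 → ιA × ιB) ℂ :=
  fun f g =>
    if (∀ a, (f a).1 = (g (permA a)).1 ∧ (f a).2 = (g (permB a)).2) then 1 else 0

/-- The unitary stabilizer group of `U` (as a finite set of pairs of Pauli
labels). -/
def Stab {N : ℕ} (U : Matrix (Fin N → Fin 2) (Fin N → Fin 2) ℂ) :
    Finset ((Fin N → Fin 4) × (Fin N → Fin 4)) :=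
  Finset.univ.filter fun p =>
    Matrix.trace (PauliString p.1 * Uᴴ * PauliString p.2 * U) / (2 ^ N : ℂ)
      ∈ ({1, -1} : Set ℂ)



-- ===================== auxiliary machinery =====================

/-- integer-valued proxies for the Pauli matrices (with `Y` replaced by
`!![0,-1;1,0]`, legitimate since the phases `i` cancel in 4-fold products). -/
def pauliZ : Fin 4 → Fin 2 → Fin 2 → ℤ :=
  ![fun i j => !![1, 0; 0, 1] i j, fun i j => !![0, 1; 1, 0] i j,
    fun i j => !![0, -1; 1, 0] i j,
    fun i j => !![1, 0; 0, -1] i j]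

def cI : Fin 4 → ℂ := ![1, 1, Complex.I, 1]

lemma pauli_eq_cast (μ : Fin 4) (i j : Fin 2) :
    pauli μ i j = cI μ * ((pauliZ μ i j : ℤ) : ℂ) := by
  fin_cases μ <;> fin_cases i <;> fin_cases j <;>
    simp [pauli, pauliZ, cI] <;> ring

lemma cI_pow_four (μ : Fin 4) : cI μ ^ 4 = 1 := by
  fin_cases μ <;> simp [cI, pow_succ]

def SfZ (t : Fin 4 → Fin 4) : ℤ :=
  ∑ μ : Fin 4, ∑ h : Fin 4 → Fin 2, ∏ a, pauliZ μ (h a) (h (t a))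

def Sf (t : Fin 4 → Fin 4) : ℂ :=
  ∑ μ : Fin 4, ∑ h : Fin 4 → Fin 2, ∏ a, pauli μ (h a) (h (t a))

lemma Sf_eq_cast (t : Fin 4 → Fin 4) : Sf t = ((SfZ t : ℤ) : ℂ) := by
  rw [Sf, SfZ]
  push_cast
  apply Finset.sum_congr rfl
  intro μ _
  apply Finset.sum_congr rfl
  intro h _
  calc ∏ a, pauli μ (h a) (h (t a))
      = ∏ a : Fin 4, cI μ * ((pauliZ μ (h a) (h (t a)) : ℤ) : ℂ) := by
        exact Finset.prod_congr rfl fun a _ => pauli_eq_cast μ (h a) (h (t a))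
    _ = (∏ _a : Fin 4, cI μ) * ∏ a : Fin 4, ((pauliZ μ (h a) (h (t a)) : ℤ) : ℂ) :=
        Finset.prod_mul_distrib
    _ = ∏ a : Fin 4, ((pauliZ μ (h a) (h (t a)) : ℤ) : ℂ) := by
        rw [Finset.prod_const, Finset.card_univ, Fintype.card_fin, cI_pow_four, one_mul]

def eC (t : Fin 4 → Fin 4) : ℕ :=
  if (Finset.univ.filter fun x => t x ≠ x).card = 0 then 2
  else if (Finset.univ.filter fun x => t x ≠ x).card = 2 then 1
  else if (Finset.univ.filter fun x => t x ≠ x).card = 3 then 0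
  else if t ∘ t = id then 2 else 1

set_option maxRecDepth 100000 in
lemma perm_cases : ∀ t : Fin 4 → Fin 4, Function.Injective t →
    t = ![0,1,2,3] ∨
    t = ![0,1,3,2] ∨
    t = ![0,2,1,3] ∨
    t = ![0,2,3,1] ∨
    t = ![0,3,1,2] ∨
    t = ![0,3,2,1] ∨
    t = ![1,0,2,3] ∨
    t = ![1,0,3,2] ∨
    t = ![1,2,0,3] ∨
    t = ![1,2,3,0] ∨
    t = ![1,3,0,2] ∨
    t = ![1,3,2,0] ∨
    t = ![2,0,1,3] ∨
    t = ![2,0,3,1] ∨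
    t = ![2,1,0,3] ∨
    t = ![2,1,3,0] ∨
    t = ![2,3,0,1] ∨
    t = ![2,3,1,0] ∨
    t = ![3,0,1,2] ∨
    t = ![3,0,2,1] ∨
    t = ![3,1,0,2] ∨
    t = ![3,1,2,0] ∨
    t = ![3,2,0,1] ∨
    t = ![3,2,1,0] := by decide

set_option maxRecDepth 100000 in
set_option maxHeartbeats 1000000 in
lemma keyZ (t : Fin 4 → Fin 4) (ht : Function.Injective t) :
    SfZ t = 4 * 2 ^ eC t := by
  rcases perm_cases t ht with rfl|rfl|rfl|rfl|rfl|rfl|rfl|rfl|rfl|rfl|rfl|rfl|rfl|rfl|rfl|rfl|rfl|rfl|rfl|rfl|rfl|rfl|rfl|rfl <;> decide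

def pAv : Fin 4 → Fin 4 := ![1,0,3,2]
def pBv : Fin 4 → Fin 4 := ![3,2,1,0]

set_option maxRecDepth 100000 in
set_option maxHeartbeats 1000000 in
lemma eC_conjA (t : Fin 4 → Fin 4) (ht : Function.Injective t) :
    eC (pAv ∘ t) = eC (t ∘ pAv) := by
  rcases perm_cases t ht with rfl|rfl|rfl|rfl|rfl|rfl|rfl|rfl|rfl|rfl|rfl|rfl|rfl|rfl|rfl|rfl|rfl|rfl|rfl|rfl|rfl|rfl|rfl|rfl <;> decide

set_option maxRecDepth 100000 in
set_option maxHeartbeats 1000000 in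
lemma eC_conjB (t : Fin 4 → Fin 4) (ht : Function.Injective t) :
    eC (pBv ∘ t) = eC (t ∘ pBv) := by
  rcases perm_cases t ht with rfl|rfl|rfl|rfl|rfl|rfl|rfl|rfl|rfl|rfl|rfl|rfl|rfl|rfl|rfl|rfl|rfl|rfl|rfl|rfl|rfl|rfl|rfl|rfl <;> decide

lemma coe_permA : ⇑permA = pAv := by
  funext x; fin_cases x <;> rfl

lemma coe_permB : ⇑permB = pBv := by
  funext x; fin_cases x <;> rfl

-- ============ cycle-structure classification for S₄ ============

lemma msum_zero (m : Multiset ℕ) (h2 : ∀ x ∈ m, 2 ≤ x) (h : m.sum = 0) : m = 0 := by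
  by_contra hm
  obtain ⟨a, ha⟩ := Multiset.exists_mem_of_ne_zero hm
  have h1 := Multiset.single_le_sum (fun x _ => Nat.zero_le x) a ha
  have := h2 a ha; omega

lemma msum_cons (m : Multiset ℕ) (h2 : ∀ x ∈ m, 2 ≤ x) (h : m.sum ≠ 0) :
    ∃ a t, m = a ::ₘ t ∧ 2 ≤ a ∧ (∀ x ∈ t, 2 ≤ x) ∧ a + t.sum = m.sum := by
  have hm : m ≠ 0 := by rintro rfl; simp at h
  obtain ⟨a, ha⟩ := Multiset.exists_mem_of_ne_zero hm
  obtain ⟨t, rfl⟩ := Multiset.exists_cons_of_mem ha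
  exact ⟨a, t, rfl, h2 a (Multiset.mem_cons_self a t),
    fun x hx => h2 x (Multiset.mem_cons_of_mem hx), (Multiset.sum_cons a t).symm⟩

lemma msum_two (m : Multiset ℕ) (h2 : ∀ x ∈ m, 2 ≤ x) (h : m.sum = 2) : m = {2} := by
  obtain ⟨a, t, rfl, ha, ht2, hsum⟩ := msum_cons m h2 (by omega)
  have ht : t.sum = 0 := by omega
  have ha2 : a = 2 := by omega
  rw [msum_zero t ht2 ht, ha2]; rfl

lemma msum_three (m : Multiset ℕ) (h2 : ∀ x ∈ m, 2 ≤ x) (h : m.sum = 3) : m = {3} := by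
  obtain ⟨a, t, rfl, ha, ht2, hsum⟩ := msum_cons m h2 (by omega)
  rw [h] at hsum
  have hle : a ≤ 3 := by omega
  interval_cases a
  · exfalso
    obtain ⟨b, u, rfl, hb, hu2, hsum'⟩ := msum_cons t ht2 (by omega)
    omega
  · have := msum_zero t ht2 (by omega); rw [this]; rfl

lemma msum_four (m : Multiset ℕ) (h2 : ∀ x ∈ m, 2 ≤ x) (h : m.sum = 4) :
    m = {4} ∨ m = {2, 2} := by
  obtain ⟨a, t, rfl, ha, ht2, hsum⟩ := msum_cons m h2 (by omega)
  rw [h] at hsum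
  have hle : a ≤ 4 := by omega
  interval_cases a
  · right; rw [msum_two t ht2 (by omega)]; rfl
  · exfalso
    obtain ⟨b, u, rfl, hb, hu2, hsum'⟩ := msum_cons t ht2 (by omega)
    omega
  · left; rw [msum_zero t ht2 (by omega)]; rfl

lemma support_card_eq (π : Equiv.Perm (Fin 4)) :
    π.support.card = (Finset.univ.filter fun x => π x ≠ x).card := by
  congr 1

lemma fixed_card (π : Equiv.Perm (Fin 4)) :
    (Finset.univ.filter fun x => π x = x).card = 4 - π.support.card := by
  have := Finset.card_filter_add_card_filter_not
    (s := (Finset.univ : Finset (Fin 4))) (fun x => π x = x)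
  rw [support_card_eq]
  simp only [Finset.card_univ, Fintype.card_fin] at this
  have h2 : (Finset.univ.filter fun x => ¬ π x = x).card
      = (Finset.univ.filter fun x => π x ≠ x).card := by congr 1
  omega

lemma sq_iff (π : Equiv.Perm (Fin 4)) : (⇑π ∘ ⇑π = id) ↔ π ^ 2 = 1 := by
  constructor
  · intro h; apply Equiv.ext; intro x
    have := congrFun h x; simpa [sq, Equiv.Perm.mul_apply] using this
  · intro h; funext x
    have := Equiv.ext_iff.mp h x; simpa [sq, Equiv.Perm.mul_apply] using this

lemma numCycles_sub_eq_eC (π : Equiv.Perm (Fin 4)) :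
    numCycles π - 2 * deltaOdd π = eC ⇑π := by
  have hsum := Equiv.Perm.sum_cycleType π
  have h2 := fun c hc => Equiv.Perm.two_le_of_mem_cycleType (σ := π) (n := c) hc
  have hcard := support_card_eq π
  have hfix := fixed_card π
  have hle : π.support.card ≤ 4 := by
    have := Finset.card_le_univ π.support; simpa using this
  have hne1 := Equiv.Perm.card_support_ne_one π
  have hforall : (∀ x, π x ≠ x) ↔ π.support.card = 4 := by
    constructor
    · intro h
      have : π.support = Finset.univ := by
        ext x; simp [Equiv.Perm.mem_support, h x]
      simp [this]
    · intro h x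
      have : π.support = Finset.univ := Finset.eq_univ_of_card _ (by simpa using h)
      have hx : x ∈ π.support := by simp [this]
      exact Equiv.Perm.mem_support.mp hx
  rw [eC, ← hcard]
  interval_cases hs : π.support.card
  · have h1 : π = 1 := Equiv.Perm.card_support_eq_zero.mp hs
    subst h1
    have hδ : deltaOdd (1 : Equiv.Perm (Fin 4)) = 1 := by
      rw [deltaOdd, if_neg]
      rintro ⟨h, -⟩; exact h 0 rfl
    rw [numCycles, hδ, Equiv.Perm.cycleType_one]
    simp [hfix, hs]
  · omega
  · have hct : π.cycleType = {2} := msum_two _ h2 (by omega)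
    have hδ : deltaOdd π = 1 := by
      rw [deltaOdd, if_neg]; rintro ⟨h, -⟩; rw [hforall] at h; omega
    rw [numCycles, hδ, hct, hfix]
    simp
  · have hct : π.cycleType = {3} := msum_three _ h2 (by omega)
    have hδ : deltaOdd π = 1 := by
      rw [deltaOdd, if_neg]; rintro ⟨h, -⟩; rw [hforall] at h; omega
    rw [numCycles, hδ, hct, hfix]
    simp
  · have hall : ∀ x, π x ≠ x := hforall.mpr rfl
    have horder := Equiv.Perm.lcm_cycleType π
    rcases msum_four _ h2 (by omega) with hct | hct
    · have hδ : deltaOdd π = 0 := by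
        rw [deltaOdd, if_pos]
        refine ⟨hall, ?_⟩
        rw [hct]; intro c hc
        rw [Multiset.mem_singleton] at hc; subst hc; decide
      have hord : orderOf π = 4 := by
        rw [← horder, hct]; simp
      have hnsq : ¬ (⇑π ∘ ⇑π = id) := by
        rw [sq_iff]
        intro hsq
        have : orderOf π ∣ 2 := orderOf_dvd_of_pow_eq_one hsq
        rw [hord] at this; omega
      rw [numCycles, hδ, hct, hfix]
      simp [hnsq]
    · have hδ : deltaOdd π = 0 := by
        rw [deltaOdd, if_pos]
        refine ⟨hall, ?_⟩
        rw [hct]; intro c hc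
        fin_cases hc <;> decide
      have hsq : ⇑π ∘ ⇑π = id := by
        rw [sq_iff, ← orderOf_dvd_iff_pow_eq_one, ← horder, hct]
        apply Multiset.lcm_dvd.mpr
        intro b hb; fin_cases hb <;> decide
      rw [numCycles, hδ, hct, hfix]
      simp [hsq]

-- ============ trace reduction ============

def sideSum (m : ℕ) (t : Fin 4 → Fin 4) : ℂ :=
  ∑ a : Fin m → Fin 4, ∑ f : Fin 4 → (Fin m → Fin 2),
    ∏ a' : Fin 4, ∏ k : Fin m, pauli (a k) (f a' k) (f (t a') k)

lemma sideSum_eq (m : ℕ) (t : Fin 4 → Fin 4) : sideSum m t = (Sf t) ^ m := by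
  have swap_f : ∀ a : Fin m → Fin 4,
      (∑ f : Fin 4 → (Fin m → Fin 2), ∏ a' : Fin 4, ∏ k : Fin m,
          pauli (a k) (f a' k) (f (t a') k))
        = ∑ f : Fin m → (Fin 4 → Fin 2), ∏ a' : Fin 4, ∏ k : Fin m,
          pauli (a k) (f k a') (f k (t a')) := by
    intro a
    exact (Equiv.sum_comp (Equiv.piComm fun _ _ => Fin 2)
      (fun f => ∏ a' : Fin 4, ∏ k : Fin m, pauli (a k) (f a' k) (f (t a') k))).symm
  rw [sideSum]
  simp_rw [swap_f]
  rw [← Fintype.sum_prod_type']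
  rw [← Equiv.sum_comp (Equiv.arrowProdEquivProdArrow (Fin m) (fun _ => Fin 4) (fun _ => Fin 4 → Fin 2))]
  have : ∀ g : Fin m → Fin 4 × (Fin 4 → Fin 2),
      (∏ a' : Fin 4, ∏ k : Fin m,
        pauli (((Equiv.arrowProdEquivProdArrow _ _ _) g).1 k)
          (((Equiv.arrowProdEquivProdArrow _ _ _) g).2 k a')
          (((Equiv.arrowProdEquivProdArrow _ _ _) g).2 k (t a')))
      = ∏ k : Fin m, ∏ a' : Fin 4, pauli (g k).1 ((g k).2 a') ((g k).2 (t a')) := by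
    intro g
    rw [Finset.prod_comm]
    rfl
  simp_rw [this]
  rw [← Fintype.piFinset_univ,
    ← Finset.prod_univ_sum (fun _ : Fin m => (Finset.univ : Finset (Fin 4 × (Fin 4 → Fin 2))))
      (fun _ c => ∏ a' : Fin 4, pauli c.1 (c.2 a') (c.2 (t a')))]
  rw [Finset.prod_const, Finset.card_univ, Fintype.card_fin]
  congr 1
  rw [Sf, Fintype.sum_prod_type]

lemma step1 {ιA ιB : Type*} [Fintype ιA] [Fintype ιB] [DecidableEq ιA] [DecidableEq ιB]
    (M : Matrix (Fin 4 → ιA × ιB) (Fin 4 → ιA × ιB) ℂ) (σ : Equiv.Perm (Fin 4)) :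
    Matrix.trace (M * Tperm σ * Tprime) =
      ∑ f : Fin 4 → ιA × ιB,
        M f (fun a => ((f (permA (σ a))).1, (f (permB (σ a))).2)) := by
  have hT : ∀ h f : Fin 4 → ιA × ιB,
      (Tprime h f : ℂ) = if h = (fun a => ((f (permA a)).1, (f (permB a)).2)) then 1 else 0 := by
    intro h f
    rw [Tprime]
    congr 1
    simp only [eq_iff_iff]
    constructor
    · intro hh; funext a; exact Prod.ext (hh a).1 (hh a).2
    · intro hh a; rw [hh]; exact ⟨rfl, rfl⟩
  simp only [Matrix.trace, Matrix.diag, Matrix.mul_apply, Tperm, hT]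
  simp only [mul_ite, mul_one, mul_zero, ite_mul, one_mul, zero_mul,
    Finset.sum_ite_eq', Finset.mem_univ, if_true, Finset.sum_ite_eq]
  rfl

lemma sum_shuffle {α β γ δ : Type*} [Fintype α] [Fintype β] [Fintype γ] [Fintype δ]
    (A : α → γ → ℂ) (B : β → δ → ℂ) :
    ∑ x : α, ∑ y : β, ∑ p : γ, ∑ q : δ, A x p * B y q
      = (∑ p, ∑ x, A x p) * (∑ q, ∑ y, B y q) := by
  calc ∑ x : α, ∑ y : β, ∑ p : γ, ∑ q : δ, A x p * B y q
      = ∑ x : α, ∑ y : β, (∑ p, A x p) * (∑ q, B y q) := by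
        simp_rw [Finset.sum_mul_sum]
    _ = (∑ x, ∑ p, A x p) * (∑ y, ∑ q, B y q) := by
        rw [← Finset.sum_mul_sum]
    _ = _ := by
        rw [Finset.sum_comm (f := fun x p => A x p),
          Finset.sum_comm (f := fun y q => B y q)]

lemma qubitEquiv_symm (NA NB : ℕ) (p : Fin NA → Fin 2) (q : Fin NB → Fin 2) :
    (qubitEquiv NA NB).symm (p, q) = Sum.elim p q ∘ ⇑finSumFinEquiv.symm := rfl

lemma PS_split (NA NB : ℕ) (aA : Fin NA → Fin 4) (aB : Fin NB → Fin 4)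
    (u1 v1 : Fin NA → Fin 2) (u2 v2 : Fin NB → Fin 2) :
    PauliString (Sum.elim aA aB ∘ ⇑finSumFinEquiv.symm)
        (Sum.elim u1 u2 ∘ ⇑finSumFinEquiv.symm) (Sum.elim v1 v2 ∘ ⇑finSumFinEquiv.symm)
      = PauliString aA u1 v1 * PauliString aB u2 v2 := by
  rw [PauliString, ← Equiv.prod_comp finSumFinEquiv, Fintype.prod_sum_type]
  simp [PauliString]

set_option maxHeartbeats 1000000 in
lemma step2 (NA NB : ℕ) (σ : Equiv.Perm (Fin 4)) :
    ∑ f : Fin 4 → (Fin NA → Fin 2) × (Fin NB → Fin 2),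
      (Matrix.reindex
          (Equiv.arrowCongr (Equiv.refl (Fin 4)) (qubitEquiv NA NB))
          (Equiv.arrowCongr (Equiv.refl (Fin 4)) (qubitEquiv NA NB))
          (LambdaPlus (NA + NB))) f
        (fun a => ((f (permA (σ a))).1, (f (permB (σ a))).2))
      = (1 / (4 : ℂ) ^ (NA + NB)) * sideSum NA ⇑(permA * σ) * sideSum NB ⇑(permB * σ) := by
  classical
  rw [← Equiv.sum_comp
    (Equiv.arrowProdEquivProdArrow (Fin 4) (fun _ => Fin NA → Fin 2) (fun _ => Fin NB → Fin 2)).symm,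
    Fintype.sum_prod_type]
  have hΦ : ∀ (x : Fin 4 → Fin NA → Fin 2) (y : Fin 4 → Fin NB → Fin 2) (a : Fin 4),
      (Equiv.arrowProdEquivProdArrow (Fin 4) (fun _ => Fin NA → Fin 2) (fun _ => Fin NB → Fin 2)).symm
        (x, y) a = (x a, y a) := fun _ _ _ => rfl
  have key : ∀ (x : Fin 4 → Fin NA → Fin 2) (y : Fin 4 → Fin NB → Fin 2),
      (Matrix.reindex
          (Equiv.arrowCongr (Equiv.refl (Fin 4)) (qubitEquiv NA NB))
          (Equiv.arrowCongr (Equiv.refl (Fin 4)) (qubitEquiv NA NB))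
          (LambdaPlus (NA + NB)))
        ((Equiv.arrowProdEquivProdArrow _ _ _).symm (x, y))
        (fun a => ((((Equiv.arrowProdEquivProdArrow _ _ _).symm (x, y))
            (permA (σ a))).1,
          (((Equiv.arrowProdEquivProdArrow _ _ _).symm (x, y)) (permB (σ a))).2))
      = (1 / (4 : ℂ) ^ (NA + NB)) *
          ∑ aA : Fin NA → Fin 4, ∑ aB : Fin NB → Fin 4,
            (∏ a' : Fin 4, ∏ k : Fin NA, pauli (aA k) (x a' k) (x ((permA * σ) a') k)) *
            (∏ a' : Fin 4, ∏ k : Fin NB, pauli (aB k) (y a' k) (y ((permB * σ) a') k)) := by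
    intro x y
    simp only [Matrix.reindex_apply, Matrix.submatrix_apply, hΦ]
    simp only [LambdaPlus, Matrix.smul_apply, Matrix.sum_apply, smul_eq_mul, replica]
    congr 1
    rw [← Equiv.sum_comp
      ((Equiv.sumArrowEquivProdArrow (Fin NA) (Fin NB) (Fin 4)).symm.trans
        (Equiv.arrowCongr finSumFinEquiv (Equiv.refl (Fin 4)))),
      Fintype.sum_prod_type]
    apply Finset.sum_congr rfl; intro aA _
    apply Finset.sum_congr rfl; intro aB _
    rw [← Finset.prod_mul_distrib]
    apply Finset.prod_congr rfl; intro a' _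
    have h1 : (Equiv.arrowCongr (Equiv.refl (Fin 4)) (qubitEquiv NA NB)).symm
        (fun a => (x a, y a)) a' = Sum.elim (x a') (y a') ∘ ⇑finSumFinEquiv.symm := rfl
    have h2 : (Equiv.arrowCongr (Equiv.refl (Fin 4)) (qubitEquiv NA NB)).symm
        (fun a => (x (permA (σ a)), y (permB (σ a)))) a'
        = Sum.elim (x (permA (σ a'))) (y (permB (σ a'))) ∘ ⇑finSumFinEquiv.symm := rfl
    have h3 : ((Equiv.sumArrowEquivProdArrow (Fin NA) (Fin NB) (Fin 4)).symm.trans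
        (Equiv.arrowCongr finSumFinEquiv (Equiv.refl (Fin 4)))) (aA, aB)
        = Sum.elim aA aB ∘ ⇑finSumFinEquiv.symm := rfl
    calc _ = PauliString (Sum.elim aA aB ∘ ⇑finSumFinEquiv.symm)
            (Sum.elim (x a') (y a') ∘ ⇑finSumFinEquiv.symm)
            (Sum.elim (x (permA (σ a'))) (y (permB (σ a'))) ∘ ⇑finSumFinEquiv.symm) := by
            rw [← h1, ← h2, ← h3]; rfl
      _ = _ := by
            rw [PS_split, PauliString, PauliString]
            rfl
  simp_rw [key]
  have pull : ∀ {α β : Type} [Fintype α] [Fintype β] (c : ℂ) (T : α → β → ℂ),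
      ∑ x, ∑ y, c * T x y = c * ∑ x, ∑ y, T x y := by
    intro α β _ _ c T
    rw [Finset.mul_sum]
    exact Finset.sum_congr rfl fun x _ => (Finset.mul_sum _ _ _).symm
  refine (pull (α := Fin 4 → Fin NA → Fin 2) (β := Fin 4 → Fin NB → Fin 2) _ _).trans ?_
  rw [mul_assoc]
  congr 1
  rw [sideSum, sideSum]
  exact sum_shuffle _ _

/-- Eq. (lamTT): `tr(Λ⁺ T_σ T')` factorizes with the
even-cycle corrections on each factor. -/
theorem trace_LambdaPlus_Tperm_Tprime (NA NB : ℕ) (σ : Equiv.Perm (Fin 4)) :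
    Matrix.trace
        (Matrix.reindex
            (Equiv.arrowCongr (Equiv.refl (Fin 4)) (qubitEquiv NA NB))
            (Equiv.arrowCongr (Equiv.refl (Fin 4)) (qubitEquiv NA NB))
            (LambdaPlus (NA + NB)) *
          Tperm σ * Tprime) =
      (2 ^ NA : ℂ) ^ (numCycles (σ * permA) - 2 * deltaOdd (σ * permA)) *
        (2 ^ NB : ℂ) ^ (numCycles (σ * permB) - 2 * deltaOdd (σ * permB)) := by
  rw [step1, step2, sideSum_eq, sideSum_eq, Sf_eq_cast, Sf_eq_cast]
  rw [keyZ _ (Equiv.injective _), keyZ _ (Equiv.injective _)]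
  -- exponents
  have hmulA : ⇑(permA * σ) = pAv ∘ ⇑σ := by
    funext a; rw [Equiv.Perm.mul_apply, ← coe_permA]; rfl
  have hmulA' : ⇑(σ * permA) = ⇑σ ∘ pAv := by
    funext a; rw [Equiv.Perm.mul_apply, ← coe_permA]; rfl
  have hmulB : ⇑(permB * σ) = pBv ∘ ⇑σ := by
    funext a; rw [Equiv.Perm.mul_apply, ← coe_permB]; rfl
  have hmulB' : ⇑(σ * permB) = ⇑σ ∘ pBv := by
    funext a; rw [Equiv.Perm.mul_apply, ← coe_permB]; rfl
  have hA : numCycles (σ * permA) - 2 * deltaOdd (σ * permA) = eC ⇑(permA * σ) := by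
    rw [numCycles_sub_eq_eC, hmulA', hmulA, eC_conjA _ (Equiv.injective σ)]
  have hB : numCycles (σ * permB) - 2 * deltaOdd (σ * permB) = eC ⇑(permB * σ) := by
    rw [numCycles_sub_eq_eC, hmulB', hmulB, eC_conjB _ (Equiv.injective σ)]
  rw [hA, hB]
  set eA := eC ⇑(permA * σ)
  set eB := eC ⇑(permB * σ)
  push_cast
  have h4 : (4 : ℂ) ^ (NA + NB) ≠ 0 := pow_ne_zero _ (by norm_num)
  field_simp
  rw [mul_pow, mul_pow, pow_add]
  rw [← pow_mul, ← pow_mul, ← pow_mul, ← pow_mul]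
  rw [Nat.mul_comm eA NA, Nat.mul_comm eB NB]
  rw [pow_mul, pow_mul]
  ring

end
end

section
/- (Λ⁺ is a projector.) For every N : ℕ, the matrix Λ⁺ on (Fin 4 → (Fin N → Fin 2)) satisfies Λ⁺ * Λ⁺ = Λ⁺. -/
open Matrix Kronecker
open scoped Classical

noncomputable section

def pmul : Fin 4 → Fin 4 → Fin 4 := ![![0,1,2,3],![1,0,3,2],![2,3,0,1],![3,2,1,0]]
def epsP : Fin 4 → Fin 4 → ℂ :=
  ![![1,1,1,1],![1,1,Complex.I,-Complex.I],![1,-Complex.I,1,Complex.I],![1,Complex.I,-Complex.I,1]]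

lemma pauli_mul_apply (i j : Fin 4) (x y : Fin 2) :
    (pauli i * pauli j) x y = epsP i j * pauli (pmul i j) x y := by
  fin_cases i <;> fin_cases j <;> fin_cases x <;> fin_cases y <;>
    simp [pauli, epsP, pmul, Matrix.mul_apply, Fin.sum_univ_two, Matrix.one_apply,
      Matrix.vecHead, Matrix.vecTail] <;>
    ring_nf <;> simp [Complex.I_sq] <;> ring

lemma epsP_pow (i j : Fin 4) : epsP i j ^ 4 = 1 := by
  fin_cases i <;> fin_cases j <;>
    simp [epsP, Matrix.vecHead, Matrix.vecTail] <;> ring_nf <;>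
    simp [Complex.I_sq] <;> ring

lemma pmul_invol (i : Fin 4) : Function.Involutive (pmul i) := by
  intro j; fin_cases i <;> fin_cases j <;> rfl

lemma replica_mul {ι : Type*} [Fintype ι] [DecidableEq ι] (n : ℕ) (O O' : Matrix ι ι ℂ) :
    replica n O * replica n O' = replica n (O * O') := by
  ext f g
  simp only [Matrix.mul_apply, replica]
  rw [Finset.prod_univ_sum, Fintype.piFinset_univ]
  exact Finset.sum_congr rfl fun x _ => Finset.prod_mul_distrib.symm

lemma replica_smul {ι : Type*} (n : ℕ) (z : ℂ) (O : Matrix ι ι ℂ) :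
    replica n (z • O) = z ^ n • replica n O := by
  ext f g
  simp [replica, Finset.prod_mul_distrib]

lemma PauliString_mul {N : ℕ} (a b : Fin N → Fin 4) :
    PauliString a * PauliString b
      = (∏ k, epsP (a k) (b k)) • PauliString (fun k => pmul (a k) (b k)) := by
  ext f g
  simp only [Matrix.mul_apply, PauliString, Matrix.smul_apply, smul_eq_mul]
  calc ∑ x : Fin N → Fin 2, (∏ k, pauli (a k) (f k) (x k)) * ∏ k, pauli (b k) (x k) (g k)
      = ∑ x : Fin N → Fin 2, ∏ k, pauli (a k) (f k) (x k) * pauli (b k) (x k) (g k) :=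
        Finset.sum_congr rfl fun x _ => (Finset.prod_mul_distrib).symm
    _ = ∏ k, ∑ j : Fin 2, pauli (a k) (f k) j * pauli (b k) j (g k) := by
        rw [Finset.prod_univ_sum, Fintype.piFinset_univ]
    _ = ∏ k, (pauli (a k) * pauli (b k)) (f k) (g k) := by
        simp [Matrix.mul_apply]
    _ = ∏ k, epsP (a k) (b k) * pauli (pmul (a k) (b k)) (f k) (g k) := by
        simp only [pauli_mul_apply]
    _ = (∏ k, epsP (a k) (b k)) * ∏ k, pauli (pmul (a k) (b k)) (f k) (g k) :=
        Finset.prod_mul_distrib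

lemma prod_epsP_pow {N : ℕ} (a b : Fin N → Fin 4) :
    (∏ k, epsP (a k) (b k)) ^ 4 = 1 := by
  rw [← Finset.prod_pow]
  simp [epsP_pow]

lemma pmulEquiv_sum {N : ℕ} (a : Fin N → Fin 4)
    (f : (Fin N → Fin 4) → Matrix (Fin 4 → (Fin N → Fin 2)) (Fin 4 → (Fin N → Fin 2)) ℂ) :
    ∑ b : Fin N → Fin 4, f (fun k => pmul (a k) (b k)) = ∑ c : Fin N → Fin 4, f c := by
  have hinv : Function.Involutive (fun b : Fin N → Fin 4 => fun k => pmul (a k) (b k)) := by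
    intro b; funext k; exact pmul_invol (a k) (b k)
  exact Fintype.sum_bijective _ hinv.bijective _ _ (fun b => rfl)

lemma sum_PS_mul_sum_PS (N : ℕ) :
    (∑ a : Fin N → Fin 4, replica 4 (PauliString a)) *
      (∑ b : Fin N → Fin 4, replica 4 (PauliString b))
      = ((4 : ℂ) ^ N) • ∑ c : Fin N → Fin 4, replica 4 (PauliString c) := by
  rw [Finset.sum_mul_sum]
  have key : ∀ a b : Fin N → Fin 4,
      replica 4 (PauliString a) * replica 4 (PauliString b)
        = replica 4 (PauliString (fun k => pmul (a k) (b k))) := by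
    intro a b
    rw [replica_mul, PauliString_mul, replica_smul, prod_epsP_pow, one_smul]
  calc ∑ a : Fin N → Fin 4, ∑ b : Fin N → Fin 4,
        replica 4 (PauliString a) * replica 4 (PauliString b)
      = ∑ a : Fin N → Fin 4, ∑ c : Fin N → Fin 4, replica 4 (PauliString c) := by
        refine Finset.sum_congr rfl fun a _ => ?_
        simp_rw [key a]
        exact pmulEquiv_sum a (fun c => replica 4 (PauliString c))
    _ = ((4 : ℂ) ^ N) • ∑ c : Fin N → Fin 4, replica 4 (PauliString c) := by
        rw [Finset.sum_const, Finset.card_univ, Fintype.card_fun]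
        simp [← Nat.cast_smul_eq_nsmul ℂ]

/-- `Λ⁺` is a projector. -/
theorem lambdaPlus_projector (N : ℕ) :
    LambdaPlus N * LambdaPlus N = LambdaPlus N := by
  have h4 : (4 : ℂ) ^ N ≠ 0 := pow_ne_zero _ (by norm_num)
  unfold LambdaPlus
  rw [Matrix.smul_mul, Matrix.mul_smul, smul_smul, sum_PS_mul_sum_PS, smul_smul]
  congr 1
  field_simp

end
end
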